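/- The complete exponential sum satisfies the uniform bound S_u(q,b,N) ≪ q^{n/2+1} for all q ≥ 1, u ∈ ℤ, b ∈ ℤⁿ and non-zero integers N, with implied constant depending only on F. -/

import Mathlib

open scoped BigOperators
open MeasureTheory

noncomputable section

/-- `e(t) = exp(2πit)` -/
def eC (t : ℝ) : ℂ := Complex.exp (2 * Real.pi * Complex.I * t)

/-- Euclidean length `|x|` of a vector in `ℝⁿ`. -/
def l2 (n : ℕ) (x : Fin n → ℝ) : ℝ := Real.sqrt (∑ i, x i ^ 2)

/-- The quadratic form `F(x) = ½ xᵀ𝓕x`. -/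
def Qform (n : ℕ) (Fm : Matrix (Fin n) (Fin n) ℤ) (x : Fin n → ℝ) : ℝ :=
  (1 / 2) * ∑ i, ∑ j, (Fm i j : ℝ) * x i * x j

/-- The Gaussian weight `w(x) = π^{-n/2} K^{An} exp(-|x - Px₀|² P^{-2} K^{2A})`, `K = log P`. -/
def gw (n : ℕ) (A P : ℝ) (x₀ x : Fin n → ℝ) : ℝ :=
  Real.pi ^ (-(n : ℝ) / 2) * Real.log P ^ (A * (n : ℝ)) *
    Real.exp (-(∑ i, (x i - P * x₀ i) ^ 2) * P ^ (-2 : ℝ) * Real.log P ^ (2 * A))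

/-- `R_ω(N) = ∑_{x ∈ ℤⁿ, F(x) = N} ω(x)`. -/
def Rcount (n : ℕ) (Fm : Matrix (Fin n) (Fin n) ℤ) (N : ℤ) (ω : (Fin n → ℝ) → ℝ) : ℝ :=
  ∑' x : Fin n → ℤ,
    if Qform n Fm (fun i => (x i : ℝ)) = (N : ℝ) then ω (fun i => (x i : ℝ)) else 0

/-- The complete exponential sum
`S_u(q,b,N) = ∑_{1≤s≤q, (s,q)=1} ∑_{v mod q} e_q(s̄ 𝔔(v,N) + us - b·v)`. -/
def expSum (n : ℕ) (Fm : Matrix (Fin n) (Fin n) ℤ) (N : ℤ) (q : ℕ) (u : ℤ)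
    (b : Fin n → ℤ) : ℂ :=
  ∑ s ∈ (Finset.Icc 1 q).filter (fun s => Nat.Coprime s q),
    ∑ v : Fin n → Fin q,
      eC (((((s : ZMod q)⁻¹).val : ℝ) * (Qform n Fm (fun i => ((v i : ℕ) : ℝ)) - (N : ℝ))
          + (u : ℝ) * (s : ℝ) - ∑ i, (b i : ℝ) * ((v i : ℕ) : ℝ)) / q)

/-- `S(α) = ∑_{x ∈ ℤⁿ} w(x) e(α 𝔔(x,N))`. -/
def Sa (n : ℕ) (Fm : Matrix (Fin n) (Fin n) ℤ) (N : ℤ) (A P : ℝ) (x₀ : Fin n → ℝ)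
    (α : ℝ) : ℂ :=
  ∑' x : Fin n → ℤ,
    (gw n A P x₀ (fun i => (x i : ℝ)) : ℂ) *
      eC (α * (Qform n Fm (fun i => (x i : ℝ)) - (N : ℝ)))

/-- `S_u(q,z) = ∑_{1≤s≤q, (s,q)=1} e_q(us) S(s̄/q + z)`. -/
def Suz (n : ℕ) (Fm : Matrix (Fin n) (Fin n) ℤ) (N : ℤ) (A P : ℝ) (x₀ : Fin n → ℝ)
    (q : ℕ) (u : ℤ) (z : ℝ) : ℂ :=
  ∑ s ∈ (Finset.Icc 1 q).filter (fun s => Nat.Coprime s q),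
    eC ((u : ℝ) * (s : ℝ) / q) * Sa n Fm N A P x₀ ((((s : ZMod q)⁻¹).val : ℝ) / q + z)

/-- `I(z,β) = ∫_{ℝⁿ} w(x) e(z 𝔔(x,N) + β·x) dx`. -/
def Iint (n : ℕ) (Fm : Matrix (Fin n) (Fin n) ℤ) (N : ℤ) (A P : ℝ) (x₀ : Fin n → ℝ)
    (z : ℝ) (β : Fin n → ℝ) : ℂ :=
  ∫ x : Fin n → ℝ, (gw n A P x₀ x : ℂ) * eC (z * (Qform n Fm x - (N : ℝ)) + ∑ i, β i * x i)

/-- The singular integral `I_w(N) = ∫_ℝ I(z,0) dz`. -/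
def Iw (n : ℕ) (Fm : Matrix (Fin n) (Fin n) ℤ) (N : ℤ) (A P : ℝ) (x₀ : Fin n → ℝ) : ℂ :=
  ∫ z : ℝ, Iint n Fm N A P x₀ z 0

/-- The singular series `𝔖(N) = ∑_{q≥1} q^{-n} S_0(q,0)`. -/
def singSeries (n : ℕ) (Fm : Matrix (Fin n) (Fin n) ℤ) (N : ℤ) : ℂ :=
  ∑' q : ℕ, ((q : ℂ) + 1) ^ (-(n : ℤ)) * expSum n Fm N (q + 1) 0 0

/-- The truncation threshold `B₀ = q K^{2+A} (P^{-1} + |z| P)`. -/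
def B0 (A P : ℝ) (q : ℕ) (z : ℝ) : ℝ :=
  (q : ℝ) * Real.log P ^ (2 + A) * (P⁻¹ + |z| * P)

/-- The dilated box `P((1+t)Γ + c)` where `B = Γ + c` is the hyperrectangle whose image
under `Mᵀ` has edges parallel to the coordinate axes, described by centre `c* = Mᵀc`
and half-edge lengths `γ`. -/
def boxSet (n : ℕ) (M : Matrix (Fin n) (Fin n) ℝ) (cstar γ : Fin n → ℝ) (t P : ℝ) :
    Set (Fin n → ℝ) :=
  {x | ∀ i, |M.transpose.mulVec x i - P * cstar i| ≤ P * (1 + t) * γ i}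

/-- The smoothed weight `W_±(x) = ∫_{(1±K^{-A/2})Γ + c} w(x; x₀) dx₀`, with `t = ±K^{-A/2}`. -/
def Wpm (n : ℕ) (M : Matrix (Fin n) (Fin n) ℝ) (cstar γ : Fin n → ℝ) (A P t : ℝ)
    (x : Fin n → ℝ) : ℝ :=
  ∫ x₀ in boxSet n M cstar γ t 1, gw n A P x₀ x

/-- `I_ω(N) = ∫_ℝ ∫_{ℝⁿ} ω(x) e(z(F(x)-N)) dx dz`. -/
def Iom (n : ℕ) (Fm : Matrix (Fin n) (Fin n) ℤ) (N : ℤ) (ω : (Fin n → ℝ) → ℝ) : ℂ :=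
  ∫ z : ℝ, ∫ x : Fin n → ℝ, (ω x : ℂ) * eC (z * (Qform n Fm x - (N : ℝ)))

end


lemma eC_add (s t : ℝ) : eC (s + t) = eC s * eC t := by
  unfold eC; rw [← Complex.exp_add]; congr 1; push_cast; ring

lemma eC_int (m : ℤ) : eC m = 1 := by
  unfold eC
  have := Complex.exp_int_mul_two_pi_mul_I m
  rw [← this]; congr 1; push_cast; ring

lemma abs_eC (t : ℝ) : ‖eC t‖ = 1 := by
  unfold eC
  rw [Complex.norm_exp]
  norm_num [Complex.mul_re, Complex.mul_im]

lemma sum_swap_lt {n : ℕ} {M : Type*} [AddCommMonoid M] (f : Fin n → Fin n → M) :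
    ∑ i, ∑ j ∈ Finset.Iio i, f i j = ∑ i, ∑ j ∈ Finset.Ioi i, f j i := by
  rw [Finset.sum_sigma', Finset.sum_sigma']
  exact Finset.sum_nbij' (fun p => ⟨p.2, p.1⟩) (fun p => ⟨p.2, p.1⟩)
    (by simp) (by simp) (by simp) (by simp) (by simp)

lemma sum_split {n : ℕ} {M : Type*} [AddCommMonoid M] (f : Fin n → Fin n → M) :
    ∑ i, ∑ j, f i j
      = (∑ i, f i i) + (∑ i, ∑ j ∈ Finset.Ioi i, f i j) + (∑ i, ∑ j ∈ Finset.Ioi i, f j i) := by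
  have huniv : ∀ i : Fin n, (Finset.univ : Finset (Fin n)) = Finset.Iio i ∪ Finset.Ici i := by
    intro i; ext j; simp [lt_or_ge]
  have hsum : ∀ i : Fin n, ∑ j, f i j
      = (∑ j ∈ Finset.Iio i, f i j) + (f i i + ∑ j ∈ Finset.Ioi i, f i j) := by
    intro i
    rw [huniv i, Finset.sum_union (by simp [Finset.disjoint_left]),
      ← Finset.Ioi_insert, Finset.sum_insert (by simp)]
  calc ∑ i, ∑ j, f i j = ∑ i, ((∑ j ∈ Finset.Iio i, f i j) + (f i i + ∑ j ∈ Finset.Ioi i, f i j)) := by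
        exact Finset.sum_congr rfl fun i _ => hsum i
    _ = _ := by rw [Finset.sum_add_distrib, Finset.sum_add_distrib, sum_swap_lt]; abel

noncomputable def eI (q : ℕ) (m : ℤ) : ℂ := eC ((m : ℝ) / q)

lemma eI_add (q : ℕ) (m1 m2 : ℤ) : eI q (m1 + m2) = eI q m1 * eI q m2 := by
  unfold eI; rw [← eC_add]; congr 1; push_cast; ring

lemma eI_zero (q : ℕ) : eI q 0 = 1 := by unfold eI eC; simp

lemma abs_eI (q : ℕ) (m : ℤ) : ‖eI q m‖ = 1 := abs_eC _

lemma eI_mod (q : ℕ) (hq : q ≠ 0) (m k : ℤ) : eI q (m + q * k) = eI q m := by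
  unfold eI
  have hq' : (q : ℝ) ≠ 0 := Nat.cast_ne_zero.2 hq
  have : ((m + q * k : ℤ) : ℝ) / q = m / q + k := by push_cast; field_simp
  rw [this, eC_add, eC_int, mul_one]

noncomputable def eps (q : ℕ) (x : ZMod q) : ℂ := eI q (x.val)

lemma eps_intCast (q : ℕ) [NeZero q] (m : ℤ) : eps q ((m : ZMod q)) = eI q m := by
  have hq : q ≠ 0 := NeZero.ne q
  have hval : (((m : ZMod q)).val : ℤ) = m % q := ZMod.val_intCast m
  have : eI q m = eI q (m % q + q * (m / q)) := by rw [Int.emod_add_mul_ediv]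
  rw [this, eI_mod q hq, eps, hval]

lemma cast_val_int (q : ℕ) [NeZero q] (x : ZMod q) : ((x.val : ℤ) : ZMod q) = x := by
  push_cast
  exact ZMod.natCast_rightInverse x

lemma eps_add (q : ℕ) [NeZero q] (x y : ZMod q) : eps q (x + y) = eps q x * eps q y := by
  have : x + y = (((x.val : ℤ) + (y.val : ℤ) : ℤ) : ZMod q) := by
    push_cast
    rw [ZMod.natCast_rightInverse x, ZMod.natCast_rightInverse y]
  rw [this, eps_intCast, eI_add]
  rfl

lemma eps_zero (q : ℕ) [NeZero q] : eps q 0 = 1 := by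
  rw [eps, ZMod.val_zero]; exact eI_zero q

lemma abs_eps (q : ℕ) (x : ZMod q) : ‖eps q x‖ = 1 := abs_eI _ _

lemma eps_ne_zero (q : ℕ) (x : ZMod q) : eps q x ≠ 0 := by
  intro h; have := abs_eps q x; rw [h] at this; simp at this

lemma eps_neg (q : ℕ) [NeZero q] (x : ZMod q) : eps q (-x) = (starRingEnd ℂ) (eps q x) := by
  have h1 : eps q x * eps q (-x) = 1 := by rw [← eps_add, add_neg_cancel, eps_zero]
  have h2 : eps q x * (starRingEnd ℂ) (eps q x) = 1 := by
    rw [Complex.mul_conj]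
    norm_cast
    rw [Complex.normSq_eq_norm_sq, abs_eps]; norm_num
  exact mul_left_cancel₀ (eps_ne_zero q x) (h1.trans h2.symm)

lemma eps_ne_one (q : ℕ) [NeZero q] {x : ZMod q} (hx : x ≠ 0) : eps q x ≠ 1 := by
  intro h
  rw [eps, eI, eC, Complex.exp_eq_one_iff] at h
  obtain ⟨k, hk⟩ := h
  have hπ : (2 * (Real.pi : ℂ) * Complex.I) ≠ 0 := by
    simp [Real.pi_ne_zero, Complex.I_ne_zero]
  have hck : ((x.val / q : ℝ) : ℂ) = (k : ℂ) := by
    have : ((x.val / q : ℝ) : ℂ) * (2 * (Real.pi : ℂ) * Complex.I)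
        = (k : ℂ) * (2 * (Real.pi : ℂ) * Complex.I) := by rw [← hk]; push_cast; ring
    exact mul_right_cancel₀ hπ this
  have hkr : (x.val / q : ℝ) = (k : ℝ) := by exact_mod_cast hck
  have hq0 : 0 < (q : ℝ) := by exact_mod_cast Nat.pos_of_ne_zero (NeZero.ne q)
  have hv0 : 0 < x.val := ZMod.val_pos.2 hx
  have hvq : x.val < q := ZMod.val_lt x
  have h1 : (0 : ℝ) < (k : ℝ) := by
    rw [← hkr]; positivity
  have h2 : (k : ℝ) < 1 := by
    rw [← hkr, div_lt_one hq0]; exact_mod_cast hvq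
  have : (0 : ℤ) < k := by exact_mod_cast h1
  have : k < 1 := by exact_mod_cast h2
  omega

lemma sum_eps_mul (q : ℕ) [NeZero q] (c : ZMod q) :
    ∑ x : ZMod q, eps q (c * x) = if c = 0 then (q : ℂ) else 0 := by
  split_ifs with h
  · subst h
    simp only [zero_mul, eps_zero]
    simp [ZMod.card]
  · have hshift : (∑ x : ZMod q, eps q (c * x)) * eps q c = ∑ x : ZMod q, eps q (c * x) := by
      rw [Finset.sum_mul]
      have : ∀ x : ZMod q, eps q (c * x) * eps q c = eps q (c * (x + 1)) := by
        intro x; rw [mul_add, mul_one, eps_add]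
      simp_rw [this]
      exact Equiv.sum_comp (Equiv.addRight (1 : ZMod q)) (fun x => eps q (c * x))
    have h1 : (∑ x : ZMod q, eps q (c * x)) * (eps q c - 1) = 0 := by
      rw [mul_sub, hshift, mul_one, sub_self]
    rcases mul_eq_zero.1 h1 with h2 | h2
    · exact h2
    · exact absurd (by linear_combination h2 : eps q c = 1) (eps_ne_one q h)

section quad
variable {n : ℕ}

def QQZ (B : Matrix (Fin n) (Fin n) ℤ) (γ : Fin n → ℤ) (x : Fin n → ℤ) : ℤ :=
  (∑ i, γ i * x i * x i) + ∑ i, ∑ j ∈ Finset.Ioi i, B i j * x i * x j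

def SSZ (B : Matrix (Fin n) (Fin n) ℤ) (x y : Fin n → ℤ) : ℤ :=
  ∑ i, ∑ j, B i j * x i * y j

lemma SS_diag (B : Matrix (Fin n) (Fin n) ℤ) (hsym : ∀ i j, B i j = B j i)
    (γ : Fin n → ℤ) (hγ : ∀ i, B i i = γ i + γ i) (x : Fin n → ℤ) :
    SSZ B x x = QQZ B γ x + QQZ B γ x := by
  rw [SSZ, sum_split (fun i j => B i j * x i * x j)]
  have h1 : ∑ i, B i i * x i * x i = ∑ i, (γ i * x i * x i + γ i * x i * x i) :=
    Finset.sum_congr rfl fun i _ => by rw [hγ i]; ring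
  have h2 : ∑ i, ∑ j ∈ Finset.Ioi i, B j i * x j * x i
      = ∑ i, ∑ j ∈ Finset.Ioi i, B i j * x i * x j :=
    Finset.sum_congr rfl fun i _ => Finset.sum_congr rfl fun j _ => by rw [hsym j i]; ring
  rw [h1, h2, Finset.sum_add_distrib, QQZ]
  ring

lemma SS_bilin (B : Matrix (Fin n) (Fin n) ℤ) (w h : Fin n → ℤ) :
    SSZ B (w + h) (w + h) = SSZ B w w + SSZ B h h + SSZ B w h + SSZ B h w := by
  unfold SSZ
  simp only [Pi.add_apply]
  have : ∀ i j, B i j * (w i + h i) * (w j + h j)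
      = B i j * w i * w j + B i j * h i * h j + B i j * w i * h j + B i j * h i * w j := by
    intro i j; ring
  simp_rw [this, Finset.sum_add_distrib]

lemma SS_symm (B : Matrix (Fin n) (Fin n) ℤ) (hsym : ∀ i j, B i j = B j i) (w h : Fin n → ℤ) :
    SSZ B h w = SSZ B w h := by
  unfold SSZ
  rw [Finset.sum_comm]
  exact Finset.sum_congr rfl fun i _ => Finset.sum_congr rfl fun j _ => by rw [hsym j i]; ring

lemma QQZ_expand (B : Matrix (Fin n) (Fin n) ℤ) (hsym : ∀ i j, B i j = B j i)
    (γ : Fin n → ℤ) (hγ : ∀ i, B i i = γ i + γ i) (w h : Fin n → ℤ) :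
    QQZ B γ (w + h) = QQZ B γ w + QQZ B γ h + SSZ B w h := by
  have key : (2 : ℤ) * QQZ B γ (w + h) = 2 * (QQZ B γ w + QQZ B γ h + SSZ B w h) := by
    have e1 := SS_diag B hsym γ hγ (w + h)
    have e2 := SS_diag B hsym γ hγ w
    have e3 := SS_diag B hsym γ hγ h
    have e4 := SS_bilin B w h
    have e5 := SS_symm B hsym w h
    linarith
  exact mul_left_cancel₀ two_ne_zero key

def QQM (q : ℕ) (B : Matrix (Fin n) (Fin n) ℤ) (γ : Fin n → ℤ) (v : Fin n → ZMod q) : ZMod q :=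
  (∑ i, (γ i : ZMod q) * v i * v i) + ∑ i, ∑ j ∈ Finset.Ioi i, (B i j : ZMod q) * v i * v j

def SSM (q : ℕ) (B : Matrix (Fin n) (Fin n) ℤ) (v w : Fin n → ZMod q) : ZMod q :=
  ∑ i, ∑ j, (B i j : ZMod q) * v i * w j

lemma QQM_cast (q : ℕ) (B : Matrix (Fin n) (Fin n) ℤ) (γ : Fin n → ℤ) (x : Fin n → ℤ) :
    QQM q B γ (fun i => ((x i : ℤ) : ZMod q)) = ((QQZ B γ x : ℤ) : ZMod q) := by
  unfold QQM QQZ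
  push_cast
  rfl

lemma SSM_cast (q : ℕ) (B : Matrix (Fin n) (Fin n) ℤ) (x y : Fin n → ℤ) :
    SSM q B (fun i => ((x i : ℤ) : ZMod q)) (fun i => ((y i : ℤ) : ZMod q))
      = ((SSZ B x y : ℤ) : ZMod q) := by
  unfold SSM SSZ
  push_cast
  rfl

lemma QQM_expand (q : ℕ) [NeZero q] (B : Matrix (Fin n) (Fin n) ℤ)
    (hsym : ∀ i j, B i j = B j i) (γ : Fin n → ℤ) (hγ : ∀ i, B i i = γ i + γ i)
    (w h : Fin n → ZMod q) :
    QQM q B γ (w + h) = QQM q B γ w + QQM q B γ h + SSM q B w h := by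
  set W : Fin n → ℤ := fun i => ((w i).val : ℤ) with hW
  set H : Fin n → ℤ := fun i => ((h i).val : ℤ) with hH
  have hw : (fun i => ((W i : ℤ) : ZMod q)) = w := funext fun i => cast_val_int q (w i)
  have hh : (fun i => ((H i : ℤ) : ZMod q)) = h := funext fun i => cast_val_int q (h i)
  have hwh : w + h = fun i => (((W + H) i : ℤ) : ZMod q) := by
    funext i
    simp only [Pi.add_apply, Int.cast_add]
    rw [cast_val_int, cast_val_int]
  rw [hwh, QQM_cast, QQZ_expand B hsym γ hγ, ← hw, ← hh]
  push_cast [QQM_cast, SSM_cast]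
  ring

end quad

lemma count_annihilator (q : ℕ) [NeZero q] (d : ℤ) (hd : d ≠ 0) :
    (Finset.univ.filter (fun x : ZMod q => (d : ZMod q) * x = 0)).card ≤ d.natAbs := by
  classical
  set D := d.natAbs with hD
  have hD0 : 0 < D := Int.natAbs_pos.2 hd
  have hq0 : 0 < q := Nat.pos_of_ne_zero (NeZero.ne q)
  have hdvd : ∀ x : ZMod q, (d : ZMod q) * x = 0 → q ∣ D * x.val := by
    intro x hx
    have h1 : (((d * (x.val : ℤ)) : ℤ) : ZMod q) = 0 := by
      push_cast
      rw [ZMod.natCast_val, ZMod.cast_id]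
      exact hx
    have h2 : (q : ℤ) ∣ d * (x.val : ℤ) := (ZMod.intCast_zmod_eq_zero_iff_dvd _ q).1 h1
    have h3 := Int.natAbs_dvd_natAbs.2 h2
    rwa [Int.natAbs_natCast, Int.natAbs_mul, Int.natAbs_natCast] at h3
  have : ∀ x ∈ Finset.univ.filter (fun x : ZMod q => (d : ZMod q) * x = 0),
      D * x.val / q ∈ Finset.range D := by
    intro x hx
    rw [Finset.mem_filter] at hx
    rw [Finset.mem_range]
    have hvlt := ZMod.val_lt x
    rw [Nat.div_lt_iff_lt_mul hq0]
    calc D * x.val < D * q := mul_lt_mul_of_pos_left hvlt hD0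
      _ = D * q := rfl
  calc (Finset.univ.filter (fun x : ZMod q => (d : ZMod q) * x = 0)).card
      ≤ (Finset.range D).card := ?_
    _ = D := Finset.card_range D
  apply Finset.card_le_card_of_injOn (fun x => D * x.val / q) (fun x hx => this x hx)
  intro x hx y hy hxy
  rw [Finset.mem_coe, Finset.mem_filter] at hx hy
  have ex' : D * x.val = D * y.val := by
    have h1 := Nat.div_mul_cancel (hdvd x hx.2)
    have h2 := Nat.div_mul_cancel (hdvd y hy.2)
    simp only at hxy
    have : D * x.val / q * q = D * y.val / q * q := by rw [hxy]
    omega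
  have : x.val = y.val := Nat.eq_of_mul_eq_mul_left hD0 ex'
  calc x = ((x.val : ℤ) : ZMod q) := (cast_val_int q x).symm
    _ = ((y.val : ℤ) : ZMod q) := by rw [this]
    _ = y := cast_val_int q y

lemma ker_card (q : ℕ) [NeZero q] {n : ℕ} (B : Matrix (Fin n) (Fin n) ℤ) (hdet : B.det ≠ 0) :
    (Finset.univ.filter
      (fun h : Fin n → ZMod q => ∀ i, ∑ j, (B i j : ZMod q) * h j = 0)).card
      ≤ B.det.natAbs ^ n := by
  classical
  set Bq : Matrix (Fin n) (Fin n) (ZMod q) := B.map (Int.cast : ℤ → ZMod q) with hBq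
  have hsub : Finset.univ.filter
      (fun h : Fin n → ZMod q => ∀ i, ∑ j, (B i j : ZMod q) * h j = 0)
      ⊆ Fintype.piFinset (fun _ : Fin n =>
          Finset.univ.filter (fun x : ZMod q => (B.det : ZMod q) * x = 0)) := by
    intro h hh
    rw [Finset.mem_filter] at hh
    rw [Fintype.mem_piFinset]
    intro i
    rw [Finset.mem_filter]
    refine ⟨Finset.mem_univ _, ?_⟩
    have hmv : Bq.mulVec h = 0 := by
      funext i
      exact hh.2 i
    have h1 : (Bq.adjugate * Bq).mulVec h = 0 := by
      rw [← Matrix.mulVec_mulVec, hmv, Matrix.mulVec_zero]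
    rw [Matrix.adjugate_mul] at h1
    have h2 : Bq.det • h = 0 := by
      rw [← h1, Matrix.smul_mulVec, Matrix.one_mulVec]
    have h3 : Bq.det = (B.det : ZMod q) := by
      rw [hBq]
      exact (RingHom.map_det (Int.castRingHom (ZMod q)) B).symm
    have := congrFun h2 i
    rw [Pi.smul_apply, smul_eq_mul, h3] at this
    exact this
  calc _ ≤ (Fintype.piFinset (fun _ : Fin n =>
        Finset.univ.filter (fun x : ZMod q => (B.det : ZMod q) * x = 0))).card :=
        Finset.card_le_card hsub
    _ = (Finset.univ.filter (fun x : ZMod q => (B.det : ZMod q) * x = 0)).card ^ n := by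
        rw [Fintype.card_piFinset]
        simp
    _ ≤ B.det.natAbs ^ n := Nat.pow_le_pow_left (count_annihilator q B.det hdet) n

lemma eps_sum (q : ℕ) [NeZero q] {ι : Type*} (s : Finset ι) (f : ι → ZMod q) :
    eps q (∑ i ∈ s, f i) = ∏ i ∈ s, eps q (f i) := by
  classical
  induction s using Finset.induction_on with
  | empty => simp [eps_zero]
  | insert a s' hx ih =>
                    rw [Finset.sum_insert hx, Finset.prod_insert hx, eps_add, ih]

lemma Tbound {n : ℕ} (q : ℕ) [NeZero q] (Fm : Matrix (Fin n) (Fin n) ℤ)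
    (hsym : ∀ i j, Fm i j = Fm j i) (g : Fin n → ℤ) (hγ : ∀ i, Fm i i = g i + g i)
    (hdet : Fm.det ≠ 0) (a sZ : ZMod q) (ha : a * sZ = 1) (bb : Fin n → ZMod q) :
    ‖∑ v : Fin n → ZMod q, eps q (a * QQM q Fm g v - ∑ i, bb i * v i)‖
      ≤ Real.sqrt ((Fm.det.natAbs : ℝ) ^ n * (q : ℝ) ^ n) := by
  classical
  set φ : (Fin n → ZMod q) → ZMod q :=
    fun v => a * QQM q Fm g v - ∑ i, bb i * v i with hφ
  set T : ℂ := ∑ v : Fin n → ZMod q, eps q (φ v) with hT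
  -- step 2 : T * conj T
  have conjT : (starRingEnd ℂ) T = ∑ w : Fin n → ZMod q, eps q (-(φ w)) := by
    rw [hT, map_sum]
    exact Finset.sum_congr rfl fun w _ => (eps_neg q (φ w)).symm
  have key : T * (starRingEnd ℂ) T
      = ∑ h : Fin n → ZMod q, eps q (a * QQM q Fm g h - ∑ i, bb i * h i) *
          (if (∀ i, ∑ j, (Fm i j : ZMod q) * h j = 0) then ((q : ℂ)) ^ n else 0) := by
    rw [conjT, hT, Finset.sum_mul_sum]
    have e1 : ∀ v w : Fin n → ZMod q, eps q (φ v) * eps q (-(φ w)) = eps q (φ v - φ w) := by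
      intro v w; rw [← eps_add, sub_eq_add_neg]
    simp_rw [e1]
    rw [Finset.sum_comm]
    have e2 : ∀ w : Fin n → ZMod q,
        ∑ v : Fin n → ZMod q, eps q (φ v - φ w)
          = ∑ h : Fin n → ZMod q, eps q (φ (w + h) - φ w) :=
      fun w => (Equiv.sum_comp (Equiv.addLeft w) (fun v => eps q (φ v - φ w))).symm
    simp_rw [e2]
    rw [Finset.sum_comm]
    refine Finset.sum_congr rfl fun h _ => ?_
    have e3 : ∀ w : Fin n → ZMod q, φ (w + h) - φ w
        = (a * QQM q Fm g h - ∑ i, bb i * h i)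
          + ∑ i, (a * ∑ j, (Fm i j : ZMod q) * h j) * w i := by
      intro w
      rw [hφ]
      simp only
      rw [QQM_expand q Fm hsym g hγ w h]
      have : SSM q Fm w h = ∑ i, (∑ j, (Fm i j : ZMod q) * h j) * w i := by
        rw [SSM]
        refine Finset.sum_congr rfl fun i _ => ?_
        rw [Finset.sum_mul]
        exact Finset.sum_congr rfl fun j _ => by ring
      rw [this]
      have hsum : ∑ i, bb i * (w + h) i = ∑ i, bb i * w i + ∑ i, bb i * h i := by
        simp only [Pi.add_apply, mul_add]
        rw [Finset.sum_add_distrib]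
      rw [hsum]
      have e3' : ∑ i, (a * ∑ j, (Fm i j : ZMod q) * h j) * w i
          = a * ∑ i, (∑ j, (Fm i j : ZMod q) * h j) * w i := by
        rw [Finset.mul_sum]
        exact Finset.sum_congr rfl fun i _ => by ring
      rw [e3']
      ring
    simp_rw [e3]
    have e4 : ∀ w : Fin n → ZMod q,
        eps q ((a * QQM q Fm g h - ∑ i, bb i * h i)
          + ∑ i, (a * ∑ j, (Fm i j : ZMod q) * h j) * w i)
        = eps q (a * QQM q Fm g h - ∑ i, bb i * h i) *
            ∏ i, eps q ((a * ∑ j, (Fm i j : ZMod q) * h j) * w i) := by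
      intro w
      rw [eps_add, eps_sum]
    simp_rw [e4]
    rw [← Finset.mul_sum]
    congr 1
    rw [← Fintype.prod_sum (fun i (x : ZMod q) => eps q ((a * ∑ j, (Fm i j : ZMod q) * h j) * x))]
    have e5 : ∀ i, ∑ x : ZMod q, eps q ((a * ∑ j, (Fm i j : ZMod q) * h j) * x)
        = if (a * ∑ j, (Fm i j : ZMod q) * h j) = 0 then (q : ℂ) else 0 :=
      fun i => sum_eps_mul q _
    simp_rw [e5]
    by_cases hall : ∀ i, ∑ j, (Fm i j : ZMod q) * h j = 0
    · rw [if_pos hall]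
      have : ∀ i : Fin n, (if (a * ∑ j, (Fm i j : ZMod q) * h j) = 0 then (q : ℂ) else 0)
          = (q : ℂ) := by
        intro i; rw [if_pos (by rw [hall i, mul_zero])]
      simp_rw [this]
      rw [Finset.prod_const]
      simp
    · rw [if_neg hall]
      push_neg at hall
      obtain ⟨i, hi⟩ := hall
      apply Finset.prod_eq_zero (Finset.mem_univ i)
      rw [if_neg]
      intro hc
      apply hi
      calc ∑ j, (Fm i j : ZMod q) * h j
          = (a * sZ) * ∑ j, (Fm i j : ZMod q) * h j := by rw [ha, one_mul]
        _ = sZ * (a * ∑ j, (Fm i j : ZMod q) * h j) := by ring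
        _ = 0 := by rw [hc, mul_zero]
  -- step 3 : bound
  have habs2 : ‖T‖ ^ 2 ≤ (Fm.det.natAbs : ℝ) ^ n * (q : ℝ) ^ n := by
    have h1 : ‖T‖ ^ 2 = ‖T * (starRingEnd ℂ) T‖ := by
      rw [norm_mul, Complex.norm_conj, sq]
    rw [h1, key]
    have step1 := norm_sum_le Finset.univ
      (fun h : Fin n → ZMod q => eps q (a * QQM q Fm g h - ∑ i, bb i * h i) *
        (if (∀ i, ∑ j, (Fm i j : ZMod q) * h j = 0) then ((q : ℂ)) ^ n else 0))
    refine le_trans step1 ?_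
    have e6 : ∀ h : Fin n → ZMod q, ‖
        (eps q (a * QQM q Fm g h - ∑ i, bb i * h i) *
          (if (∀ i, ∑ j, (Fm i j : ZMod q) * h j = 0) then ((q : ℂ)) ^ n else 0))‖
        = (if (∀ i, ∑ j, (Fm i j : ZMod q) * h j = 0) then ((q : ℝ)) ^ n else 0) := by
      intro h
      rw [norm_mul, abs_eps, one_mul]
      split_ifs
      · rw [norm_pow, Complex.norm_natCast]
      · simp
    simp_rw [e6]
    rw [← Finset.sum_filter]
    rw [Finset.sum_const, nsmul_eq_mul]
    calc ((Finset.univ.filter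
          (fun h : Fin n → ZMod q => ∀ i, ∑ j, (Fm i j : ZMod q) * h j = 0)).card : ℝ)
          * (q : ℝ) ^ n
        ≤ ((Fm.det.natAbs ^ n : ℕ) : ℝ) * (q : ℝ) ^ n := by
          apply mul_le_mul_of_nonneg_right _ (by positivity)
          exact_mod_cast ker_card q Fm hdet
      _ = (Fm.det.natAbs : ℝ) ^ n * (q : ℝ) ^ n := by push_cast; ring
  have : ‖T‖ = Real.sqrt (‖T‖ ^ 2) := by
    rw [Real.sqrt_sq (norm_nonneg T)]
  rw [this]
  exact Real.sqrt_le_sqrt habs2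

lemma Qform_eq {n : ℕ} (Fm : Matrix (Fin n) (Fin n) ℤ) (hsym : ∀ i j, Fm i j = Fm j i)
    (g : Fin n → ℤ) (hγ : ∀ i, Fm i i = g i + g i) (x : Fin n → ℤ) :
    Qform n Fm (fun i => (x i : ℝ)) = ((QQZ Fm g x : ℤ) : ℝ) := by
  unfold Qform QQZ
  rw [sum_split (fun i j => (Fm i j : ℝ) * ((x i : ℝ)) * ((x j : ℝ)))]
  have hU : ∑ i, ∑ j ∈ Finset.Ioi i, (Fm j i : ℝ) * (x j : ℝ) * (x i : ℝ)
      = ∑ i, ∑ j ∈ Finset.Ioi i, (Fm i j : ℝ) * (x i : ℝ) * (x j : ℝ) :=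
    Finset.sum_congr rfl fun i _ => Finset.sum_congr rfl fun j _ => by rw [hsym j i]; ring
  have hD : ∑ i, (Fm i i : ℝ) * (x i : ℝ) * (x i : ℝ)
      = ∑ i, ((g i : ℝ) * (x i : ℝ) * (x i : ℝ) + (g i : ℝ) * (x i : ℝ) * (x i : ℝ)) :=
    Finset.sum_congr rfl fun i _ => by rw [hγ i]; push_cast; ring
  rw [hU, hD, Finset.sum_add_distrib]
  push_cast
  ring

lemma QQM_cast_nat {n : ℕ} (q : ℕ) (B : Matrix (Fin n) (Fin n) ℤ) (γ : Fin n → ℤ)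
    (v : Fin n → ℕ) :
    QQM q B γ (fun i => ((v i : ℕ) : ZMod q)) = ((QQZ B γ (fun i => ((v i : ℕ) : ℤ)) : ℤ) : ZMod q) := by
  rw [← QQM_cast]
  congr 1
  funext i
  push_cast
  rfl

noncomputable def finZEquiv (q : ℕ) [NeZero q] : Fin q ≃ ZMod q where
  toFun i := ((i : ℕ) : ZMod q)
  invFun x := ⟨x.val, x.val_lt⟩
  left_inv i := by
    ext
    simp [ZMod.val_cast_of_lt i.isLt]
  right_inv x := ZMod.natCast_rightInverse x

theorem stmt6 (n : ℕ) (hn : 4 ≤ n) (Fm : Matrix (Fin n) (Fin n) ℤ)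
    (hsym : ∀ i j, Fm i j = Fm j i) (heven : ∀ i, Even (Fm i i)) (hdet : Fm.det ≠ 0) :
    ∃ C > (0 : ℝ), ∀ q : ℕ, 1 ≤ q → ∀ u : ℤ, ∀ b : Fin n → ℤ, ∀ N : ℤ, N ≠ 0 →
      ‖expSum n Fm N q u b‖ ≤ C * (q : ℝ) ^ ((n : ℝ) / 2 + 1) := by
  classical
  choose g hγ using heven
  have hD0 : 0 < Fm.det.natAbs := Int.natAbs_pos.2 hdet
  refine ⟨Real.sqrt ((Fm.det.natAbs : ℝ) ^ n), Real.sqrt_pos.2 (by positivity), ?_⟩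
  intro q hq u b N _hN
  haveI : NeZero q := ⟨by omega⟩
  have hq0 : (0 : ℝ) < q := by exact_mod_cast Nat.lt_of_lt_of_le Nat.zero_lt_one hq
  have hper : ∀ s ∈ (Finset.Icc 1 q).filter (fun s => Nat.Coprime s q),
      ‖∑ v : Fin n → Fin q,
        eC (((((s : ZMod q)⁻¹).val : ℝ) * (Qform n Fm (fun i => ((v i : ℕ) : ℝ)) - (N : ℝ))
            + (u : ℝ) * (s : ℝ) - ∑ i, (b i : ℝ) * ((v i : ℕ) : ℝ)) / q)‖
        ≤ Real.sqrt ((Fm.det.natAbs : ℝ) ^ n) * Real.sqrt ((q : ℝ) ^ n) := by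
    intro s hs
    rw [Finset.mem_filter] at hs
    have hcop : Nat.Coprime s q := hs.2
    have haZ : ((((s : ZMod q)⁻¹).val : ℕ) : ZMod q) = ((s : ZMod q))⁻¹ :=
      ZMod.natCast_rightInverse _
    have hunit : ((s : ZMod q))⁻¹ * ((s : ℕ) : ZMod q) = 1 := by
      rw [mul_comm]; exact ZMod.coe_mul_inv_eq_one s hcop
    set a : ℕ := ((s : ZMod q)⁻¹).val with hadef
    set KB : ℤ := u * (s : ℤ) - (a : ℤ) * N with hKB
    have hterm : ∀ v : Fin n → Fin q,
        eC ((((a : ℕ) : ℝ) * (Qform n Fm (fun i => ((v i : ℕ) : ℝ)) - (N : ℝ))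
            + (u : ℝ) * (s : ℝ) - ∑ i, (b i : ℝ) * ((v i : ℕ) : ℝ)) / q)
          = eI q KB * eps q (((s : ZMod q))⁻¹ * QQM q Fm g (fun i => ((v i : ℕ) : ZMod q))
              - ∑ i, (b i : ZMod q) * ((v i : ℕ) : ZMod q)) := by
      intro v
      have hx : (fun i => ((((v i : ℕ) : ℤ)) : ℝ)) = (fun i => ((v i : ℕ) : ℝ)) := by
        funext i; push_cast; rfl
      have hQ : Qform n Fm (fun i => ((v i : ℕ) : ℝ))
          = ((QQZ Fm g (fun i => ((v i : ℕ) : ℤ)) : ℤ) : ℝ) := by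
        rw [← hx]
        exact Qform_eq Fm hsym g hγ _
      set KA : ℤ := (a : ℤ) * QQZ Fm g (fun i => ((v i : ℕ) : ℤ))
          - ∑ i, b i * ((v i : ℕ) : ℤ) with hKA
      have harg : (((a : ℕ) : ℝ) * (((QQZ Fm g (fun i => ((v i : ℕ) : ℤ)) : ℤ) : ℝ) - (N : ℝ))
            + (u : ℝ) * (s : ℝ) - ∑ i, (b i : ℝ) * ((v i : ℕ) : ℝ)) / q
          = ((KA + KB : ℤ) : ℝ) / q := by
        rw [hKA, hKB]; push_cast; ring
      rw [hQ, harg]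
      have h0 : eC (((KA + KB : ℤ) : ℝ) / q) = eI q (KA + KB) := rfl
      rw [h0, eI_add, mul_comm]
      congr 1
      rw [← eps_intCast q KA, hKA]
      congr 1
      push_cast
      rw [QQM_cast_nat, haZ]
    have hsplit : (∑ v : Fin n → Fin q,
        eC ((((a : ℕ) : ℝ) * (Qform n Fm (fun i => ((v i : ℕ) : ℝ)) - (N : ℝ))
            + (u : ℝ) * (s : ℝ) - ∑ i, (b i : ℝ) * ((v i : ℕ) : ℝ)) / q))
        = eI q KB * ∑ w : Fin n → ZMod q,
            eps q (((s : ZMod q))⁻¹ * QQM q Fm g w - ∑ i, (b i : ZMod q) * w i) := by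
      rw [Finset.mul_sum]
      rw [Finset.sum_congr rfl (fun v _ => hterm v)]
      exact Fintype.sum_equiv (Equiv.piCongrRight fun _ => finZEquiv q)
        _ _ (fun v => rfl)
    rw [hsplit, norm_mul, abs_eI, one_mul]
    refine le_trans (Tbound q Fm hsym g hγ hdet ((s : ZMod q))⁻¹ ((s : ℕ) : ZMod q) hunit
      (fun i => (b i : ZMod q))) ?_
    rw [Real.sqrt_mul (by positivity)]
  unfold expSum
  refine le_trans (norm_sum_le _ _) ?_
  refine le_trans (Finset.sum_le_sum hper) ?_
  rw [Finset.sum_const, nsmul_eq_mul]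
  have hcard : (((Finset.Icc 1 q).filter (fun s => Nat.Coprime s q)).card : ℝ) ≤ (q : ℝ) := by
    have h1 : ((Finset.Icc 1 q).filter (fun s => Nat.Coprime s q)).card ≤ (Finset.Icc 1 q).card :=
      Finset.card_filter_le _ _
    have h2 : (Finset.Icc 1 q).card = q := by rw [Nat.card_Icc]; omega
    exact_mod_cast h1.trans_eq h2
  have hpow : Real.sqrt ((Fm.det.natAbs : ℝ) ^ n) * (q : ℝ) ^ ((n : ℝ) / 2 + 1)
      = (q : ℝ) * (Real.sqrt ((Fm.det.natAbs : ℝ) ^ n) * Real.sqrt ((q : ℝ) ^ n)) := by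
    rw [Real.rpow_add hq0, Real.rpow_one]
    have hq2 : (q : ℝ) ^ ((n : ℝ) / 2) = Real.sqrt ((q : ℝ) ^ n) := by
      rw [Real.sqrt_eq_rpow, ← Real.rpow_natCast (q : ℝ) n, ← Real.rpow_mul hq0.le]
      congr 1; ring
    rw [hq2]; ring
  rw [hpow]
  exact mul_le_mul_of_nonneg_right hcard (by positivity)
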